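/- Let a_1, a_2, a_3 ≥ 2 be pairwise coprime integers and b_1, b_2, b_3 positive integers with 0 < b_i < a_i, satisfying b_1/a_1 + b_2/a_2 + b_3/a_3 = 1 + ε/(a_1 a_2 a_3) with ε ∈ {−1, 1}, ordered so that b_1/a_1 > b_2/a_2 > b_3/a_3. Set α_1 = 1 − b_1/a_1 and α_2 = b_2/a_2. Then α_2 > α_1 − α_2. -/

import Mathlib

theorem stmt_3 (a₁ a₂ a₃ b₁ b₂ b₃ ε : ℤ)
    (ha₁ : 2 ≤ a₁) (ha₂ : 2 ≤ a₂) (ha₃ : 2 ≤ a₃)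
    (hcop12 : IsCoprime a₁ a₂) (hcop13 : IsCoprime a₁ a₃) (hcop23 : IsCoprime a₂ a₃)
    (hb₁ : 0 < b₁) (hb₁' : b₁ < a₁) (hb₂ : 0 < b₂) (hb₂' : b₂ < a₂)
    (hb₃ : 0 < b₃) (hb₃' : b₃ < a₃)
    (hε : ε = 1 ∨ ε = -1)
    (heq : (b₁ : ℚ) / a₁ + (b₂ : ℚ) / a₂ + (b₃ : ℚ) / a₃
      = 1 + (ε : ℚ) / ((a₁ : ℚ) * a₂ * a₃))
    (hord₁ : (b₂ : ℚ) / a₂ < (b₁ : ℚ) / a₁) (hord₂ : (b₃ : ℚ) / a₃ < (b₂ : ℚ) / a₂) :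
    (b₂ : ℚ) / a₂ > (1 - (b₁ : ℚ) / a₁) - (b₂ : ℚ) / a₂ := by
  have h1 : (0:ℚ) < (a₁:ℚ) := by exact_mod_cast lt_of_lt_of_le zero_lt_two ha₁
  have h2 : (0:ℚ) < (a₂:ℚ) := by exact_mod_cast lt_of_lt_of_le zero_lt_two ha₂
  have h3 : (0:ℚ) < (a₃:ℚ) := by exact_mod_cast lt_of_lt_of_le zero_lt_two ha₃
  have hkey : (1:ℚ) ≤ (b₂:ℚ) * a₃ - (b₃:ℚ) * a₂ := by
    have : (b₃:ℚ) * a₂ < (b₂:ℚ) * a₃ := by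
      rw [div_lt_div_iff₀ h3 h2] at hord₂; linarith
    have hz : (1:ℤ) ≤ b₂ * a₃ - b₃ * a₂ := by
      have : b₃ * a₂ < b₂ * a₃ := by exact_mod_cast this
      omega
    exact_mod_cast (by exact_mod_cast hz : (1:ℚ) ≤ ((b₂ * a₃ - b₃ * a₂ : ℤ) : ℚ))
  rcases hε with h | h <;> subst h <;>
  · field_simp at heq ⊢
    push_cast at heq ⊢
    have ha1q : (2:ℚ) ≤ (a₁:ℚ) := by exact_mod_cast ha₁
    rw [← mul_lt_mul_iff_of_pos_right h3]
    nlinarith [mul_pos h1 h2, mul_pos h2 h3, mul_pos h1 h3, mul_pos (mul_pos h1 h2) h3,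
      mul_le_mul_of_nonneg_left hkey (by linarith : (0:ℚ) ≤ (a₁:ℚ)),
      mul_le_mul_of_nonneg_right ha1q (by linarith : (0:ℚ) ≤ (b₂:ℚ)*a₃ - (b₃:ℚ)*a₂)]
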